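/- Let C ⊆ F_2^n be a neural code. Then {f^p : f ∈ CF(J_C)} = CF(J_{C^[p]}), and CF(J_{C^[p]}) ⊆ CF(J_{C^p}). -/

import Mathlib

open MvPolynomial

/-- The field with two elements. -/
abbrev F2 := ZMod 2

/-- A motif indexed by `ι`: at each index it is `0`, `1`, or `*` (represented by `none`). -/
abbrev Motif (ι : Type*) := ι → Option F2

/-- The partial order on motifs: `a ≤ b` iff `a i = b i` for every index `i` with `b i ≠ *`. -/
def MotifLE {ι : Type*} (a b : Motif ι) : Prop :=
  ∀ (i : ι) (x : F2), b i = some x → a i = some x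

/-- The variety of a motif: all words agreeing with the motif on its non-`*` coordinates. -/
def variety {ι : Type*} (a : Motif ι) : Set (ι → F2) :=
  {w | ∀ (i : ι) (x : F2), a i = some x → w i = x}

/-- `a` is a motif of the code `C` iff its variety is contained in `C`. -/
def IsMotifOf {ι : Type*} (C : Set (ι → F2)) (a : Motif ι) : Prop :=
  variety a ⊆ C

/-- The set of maximal motifs of a code `C`. -/
def maxMot {ι : Type*} (C : Set (ι → F2)) : Set (Motif ι) :=
  {a | IsMotifOf C a ∧ ∀ b : Motif ι, IsMotifOf C b → MotifLE a b → a = b}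

/-- Two motifs are disjoint if at some index both are non-`*` and they differ. -/
def DisjointMotifs {ι : Type*} (a b : Motif ι) : Prop :=
  ∃ (i : ι) (x : F2), a i = some x ∧ b i = some (1 - x)

/-- Polarization of a motif of length `n`, as a motif of length `2n`
(indexed by `Fin n ⊕ Fin n`; `Sum.inl i` is coordinate `i`, `Sum.inr i` is coordinate `n+i`). -/
def polMotif {n : ℕ} (a : Motif (Fin n)) : Motif (Fin n ⊕ Fin n)
  | Sum.inl i => if a i = some 0 then some 0 else none
  | Sum.inr i => if a i = some 1 then some 0 else none

/-- The bar of a motif: `0 ↦ 1`, `1 ↦ 0`, `* ↦ *`. -/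
def barMotif {ι : Type*} (a : Motif ι) : Motif ι :=
  fun i => (a i).map (fun x => 1 - x)

/-- The polarization of a code `C ⊆ F₂ⁿ`: the union of the varieties of the
polarizations of the maximal motifs of `C`. -/
def polCode {n : ℕ} (C : Set (Fin n → F2)) : Set ((Fin n ⊕ Fin n) → F2) :=
  ⋃ a ∈ maxMot C, variety (polMotif a)

/-- The code `over-over-D-p` : the union of the varieties of `bar (pol (bar b))`
over the maximal motifs `b` of `D`. -/
def barPolBarCode {n : ℕ} (D : Set (Fin n → F2)) : Set ((Fin n ⊕ Fin n) → F2) :=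
  ⋃ b ∈ maxMot D, variety (barMotif (polMotif (barMotif b)))

/-- The formal polarization of a code `C`: the complement of `barPolBarCode` of `Cᶜ`. -/
def formalPol {n : ℕ} (C : Set (Fin n → F2)) : Set ((Fin n ⊕ Fin n) → F2) :=
  (barPolBarCode Cᶜ)ᶜ

/-- The Lagrange polynomial of a motif. -/
noncomputable def lagrange {ι : Type*} [Fintype ι] (a : Motif ι) : MvPolynomial ι F2 :=
  (∏ i ∈ Finset.univ.filter (fun i => a i = some 1), X i) *
    ∏ j ∈ Finset.univ.filter (fun j => a j = some 0), (1 - X j)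

/-- The motif (with no stars) corresponding to a word. -/
def wordMotif {ι : Type*} (w : ι → F2) : Motif ι := fun i => some (w i)

/-- The neural ideal of a code: generated by the Lagrange polynomials of the
words in the complement of the code. -/
noncomputable def neuralIdeal {ι : Type*} [Fintype ι] (C : Set (ι → F2)) :
    Ideal (MvPolynomial ι F2) :=
  Ideal.span ((fun w => lagrange (wordMotif w)) '' Cᶜ)

/-- The pseudo-monomial `∏_{i ∈ σ} X i * ∏_{j ∈ τ} (1 - X j)`. -/
noncomputable def pm {ι : Type*} (σ τ : Finset ι) : MvPolynomial ι F2 :=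
  (∏ i ∈ σ, X i) * ∏ j ∈ τ, (1 - X j)

/-- A polynomial is a pseudo-monomial if it equals `pm σ τ` for disjoint `σ τ`. -/
def IsPseudoMonomial {ι : Type*} (f : MvPolynomial ι F2) : Prop :=
  ∃ σ τ : Finset ι, Disjoint σ τ ∧ f = pm σ τ

/-- The canonical form of an ideal: the set of its minimal pseudo-monomials, i.e.
pseudo-monomials `f ∈ I` such that no pseudo-monomial `g ∈ I` of strictly smaller
degree divides `f`. -/
def CF {ι : Type*} (I : Ideal (MvPolynomial ι F2)) : Set (MvPolynomial ι F2) :=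
  {f | IsPseudoMonomial f ∧ f ∈ I ∧
    ¬ ∃ g : MvPolynomial ι F2, IsPseudoMonomial g ∧ g ∈ I ∧
      g.totalDegree < f.totalDegree ∧ g ∣ f}

/-- The polarization of the pseudo-monomial with data `(σ, τ)`:
`∏_{i ∈ σ} X i * ∏_{j ∈ τ} Y j` (here `Y j = X (Sum.inr j)`). -/
noncomputable def ppm {n : ℕ} (σ τ : Finset (Fin n)) : MvPolynomial (Fin n ⊕ Fin n) F2 :=
  (∏ i ∈ σ, X (Sum.inl i)) * ∏ j ∈ τ, X (Sum.inr j)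

/-- `g` is the polarization of the pseudo-monomial `f`. -/
def PolPM {n : ℕ} (f : MvPolynomial (Fin n) F2) (g : MvPolynomial (Fin n ⊕ Fin n) F2) : Prop :=
  ∃ σ τ : Finset (Fin n), Disjoint σ τ ∧ f = pm σ τ ∧ g = ppm σ τ

/-- The set of polarizations of the elements of a set of pseudo-monomials. -/
def polSet {n : ℕ} (S : Set (MvPolynomial (Fin n) F2)) :
    Set (MvPolynomial (Fin n ⊕ Fin n) F2) :=
  {g | ∃ f ∈ S, PolPM f g}

/-- The prime ideal of a motif: generated by `X i` for `a i = 0`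
and `1 - X j` for `a j = 1`. -/
noncomputable def pIdeal {ι : Type*} (a : Motif ι) : Ideal (MvPolynomial ι F2) :=
  Ideal.span ({f | ∃ i, a i = some 0 ∧ f = X i} ∪ {f | ∃ j, a j = some 1 ∧ f = 1 - X j})
section MotifBasics

variable {ι : Type*}

lemma F2cases (x : F2) : x = 0 ∨ x = 1 := by revert x; decide

lemma motifLE_refl (a : Motif ι) : MotifLE a a := fun _ _ h => h

lemma motifLE_trans {a b c : Motif ι} (hab : MotifLE a b) (hbc : MotifLE b c) :
    MotifLE a c := fun i x h => hab i x (hbc i x h)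

/-- The default word in the variety of a motif. -/
def defWord (a : Motif ι) : ι → F2 := fun i => (a i).getD 0

lemma defWord_mem (a : Motif ι) : defWord a ∈ variety a := by
  intro i x hx; simp [defWord, hx]

lemma variety_subset_iff {a b : Motif ι} : variety a ⊆ variety b ↔ MotifLE a b := by
  constructor
  · intro h i x hx
    by_contra hne
    classical
    set w : ι → F2 := fun j => if j = i then 1 - x else (a j).getD 0 with hw
    have hwa : w ∈ variety a := by
      intro j y hy
      by_cases hj : j = i
      · subst hj
        have hyx : y ≠ x := fun hc => hne (hc ▸ hy)
        have : (1 : F2) - x = y := by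
          rcases F2cases x with rfl | rfl <;> rcases F2cases y with rfl | rfl <;>
            first | rfl | exact absurd rfl hyx
        simp [hw, this]
      · simp [hw, hj, hy]
    have hwi := h hwa i x hx
    have : w i = 1 - x := by simp [hw]
    rw [this] at hwi
    rcases F2cases x with rfl | rfl <;> simp_all
  · intro h w hw i x hx
    exact hw i x (h i x hx)

lemma motifLE_antisymm {a b : Motif ι} (hab : MotifLE a b) (hba : MotifLE b a) :
    a = b := by
  funext i
  cases hai : a i with
  | none =>
    cases hbi : b i with
    | none => rfl
    | some x => exact absurd (hab i x hbi) (by rw [hai]; simp)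
  | some x =>
    have := hba i x hai
    rw [this]

lemma variety_inj {a b : Motif ι} (h : variety a = variety b) : a = b :=
  motifLE_antisymm (variety_subset_iff.mp h.le) (variety_subset_iff.mp h.ge)

lemma variety_wordMotif (w : ι → F2) : variety (wordMotif w) = {w} := by
  ext v
  constructor
  · intro hv
    have : v = w := funext fun i => hv i (w i) rfl
    simp [this]
  · rintro rfl i x hx
    exact Option.some_injective _ hx

/-- Every motif of a code lies below some maximal motif. -/
lemma exists_le_maxMot [Fintype ι] [DecidableEq ι] (C : Set (ι → F2)) (a : Motif ι)
    (ha : IsMotifOf C a) : ∃ b ∈ maxMot C, MotifLE a b := by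
  classical
  set cnt : Motif ι → ℕ := fun b => (Finset.univ.filter (fun i => b i ≠ none)).card with hcnt
  set S : Set (Motif ι) := {b | IsMotifOf C b ∧ MotifLE a b} with hS
  have hfin : S.Finite := Set.toFinite S
  have hne : S.Nonempty := ⟨a, ha, motifLE_refl a⟩
  obtain ⟨b, hbS, hmin'⟩ := Set.Finite.exists_minimalFor cnt S hfin hne
  have hmin : ∀ c ∈ S, cnt c ≤ cnt b → cnt b = cnt c := fun c hc h => le_antisymm (hmin' hc h) h
  refine ⟨b, ⟨hbS.1, ?_⟩, hbS.2⟩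
  intro c hc hbc
  have hcS : c ∈ S := ⟨hc, motifLE_trans hbS.2 hbc⟩
  have hsub : (Finset.univ.filter (fun i => c i ≠ none)) ⊆
      (Finset.univ.filter (fun i => b i ≠ none)) := by
    intro i hi
    simp only [Finset.mem_filter, Finset.mem_univ, true_and] at hi ⊢
    cases hci : c i with
    | none => exact absurd hci hi
    | some x => rw [hbc i x hci]; simp
  have hle : cnt c ≤ cnt b := Finset.card_le_card hsub
  have heq := hmin c hcS hle
  have hset : (Finset.univ.filter (fun i => c i ≠ none)) =
      (Finset.univ.filter (fun i => b i ≠ none)) :=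
    Finset.eq_of_subset_of_card_le hsub (le_of_eq heq)
  funext i
  cases hci : c i with
  | some x => exact hbc i x hci
  | none =>
    by_contra hbi
    have hbne : b i ≠ none := fun h => hbi (h.trans rfl)
    have : i ∈ (Finset.univ.filter (fun i => c i ≠ none)) := by
      rw [hset]; simp [hbne]
    simp [hci] at this

end MotifBasics
section Phi

variable {n : ℕ}

/-- The motif map `b ↦ bar (pol (bar b))`. -/
def phi (b : Motif (Fin n)) : Motif (Fin n ⊕ Fin n) :=
  barMotif (polMotif (barMotif b))

lemma phi_aux1 : ∀ o : Option F2,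
    Option.map (fun x : F2 => 1 - x) (if Option.map (fun x : F2 => 1 - x) o = some 0 then some 0 else none) =
      if o = some 1 then some 1 else none := by decide

lemma phi_aux2 : ∀ o : Option F2,
    Option.map (fun x : F2 => 1 - x) (if Option.map (fun x : F2 => 1 - x) o = some 1 then some 0 else none) =
      if o = some 0 then some 1 else none := by decide

lemma phi_inl (b : Motif (Fin n)) (i : Fin n) :
    phi b (Sum.inl i) = if b i = some 1 then some 1 else none := by
  simp only [phi, barMotif, polMotif]
  exact phi_aux1 (b i)

lemma phi_inr (b : Motif (Fin n)) (i : Fin n) :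
    phi b (Sum.inr i) = if b i = some 0 then some 1 else none := by
  simp only [phi, barMotif, polMotif]
  exact phi_aux2 (b i)

lemma phi_some {b : Motif (Fin n)} {p : Fin n ⊕ Fin n} {x : F2}
    (h : phi b p = some x) : x = 1 := by
  cases p with
  | inl i =>
    rw [phi_inl] at h
    by_cases h1 : b i = some 1
    · rw [if_pos h1] at h; exact (Option.some_injective _ h).symm
    · rw [if_neg h1] at h; exact absurd h (by simp)
  | inr i =>
    rw [phi_inr] at h
    by_cases h1 : b i = some 0
    · rw [if_pos h1] at h; exact (Option.some_injective _ h).symm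
    · rw [if_neg h1] at h; exact absurd h (by simp)

lemma phi_inl_one {b : Motif (Fin n)} {i : Fin n} (h : phi b (Sum.inl i) = some 1) :
    b i = some 1 := by
  rw [phi_inl] at h
  by_cases h1 : b i = some 1
  · exact h1
  · rw [if_neg h1] at h; exact absurd h (by simp)

lemma phi_inr_one {b : Motif (Fin n)} {i : Fin n} (h : phi b (Sum.inr i) = some 1) :
    b i = some 0 := by
  rw [phi_inr] at h
  by_cases h1 : b i = some 0
  · exact h1
  · rw [if_neg h1] at h; exact absurd h (by simp)

/-- The canonical all-ones word of a motif on the doubled index set. -/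
def oneWord (c : Motif (Fin n ⊕ Fin n)) : (Fin n ⊕ Fin n) → F2 :=
  fun p => if c p = some 1 then 1 else 0

lemma oneWord_mem (c : Motif (Fin n ⊕ Fin n)) : oneWord c ∈ variety c := by
  intro p x hp
  rcases F2cases x with rfl | rfl
  · have : c p ≠ some 1 := by rw [hp]; decide
    simp [oneWord, this]
  · simp [oneWord, hp]

lemma oneWord_eq_one {c : Motif (Fin n ⊕ Fin n)} {p : Fin n ⊕ Fin n}
    (h : oneWord c p = 1) : c p = some 1 := by
  by_contra hne
  simp [oneWord, hne] at h

/-- (A) The maximal motifs of `barPolBarCode D` are exactly the `phi b` for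
`b` maximal in `D`. -/
lemma maxMot_barPolBarCode (D : Set (Fin n → F2)) :
    maxMot (barPolBarCode D) = {c | ∃ b ∈ maxMot D, c = phi b} := by
  have hvar : ∀ b : Motif (Fin n),
      variety (barMotif (polMotif (barMotif b))) = variety (phi b) := fun _ => rfl
  ext c
  constructor
  · rintro ⟨hcE, hmax⟩
    have huE : oneWord c ∈ barPolBarCode D := hcE (oneWord_mem c)
    simp only [barPolBarCode, Set.mem_iUnion] at huE
    obtain ⟨b, hbM, hub⟩ := huE
    have hle : MotifLE c (phi b) := by
      intro p x hp
      have hx1 : x = 1 := phi_some hp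
      subst hx1
      exact oneWord_eq_one (hub p 1 hp)
    have hphimot : IsMotifOf (barPolBarCode D) (phi b) := by
      intro u hu
      simp only [barPolBarCode, Set.mem_iUnion]
      exact ⟨b, hbM, hu⟩
    exact ⟨b, hbM, hmax (phi b) hphimot hle⟩
  · rintro ⟨b, hbM, rfl⟩
    constructor
    · intro u hu
      simp only [barPolBarCode, Set.mem_iUnion]
      exact ⟨b, hbM, hu⟩
    · intro c hc hlc
      have huc : oneWord c ∈ variety c := oneWord_mem c
      have huE : oneWord c ∈ barPolBarCode D := hc huc
      simp only [barPolBarCode, Set.mem_iUnion] at huE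
      obtain ⟨b', hb'M, hub'⟩ := huE
      have hbb' : MotifLE b b' := by
        intro i x hx
        rcases F2cases x with rfl | rfl
        · have h1 : phi b' (Sum.inr i) = some 1 := by rw [phi_inr, if_pos hx]
          have h2 : oneWord c (Sum.inr i) = 1 := hub' _ 1 h1
          have h3 : c (Sum.inr i) = some 1 := oneWord_eq_one h2
          exact phi_inr_one (hlc _ 1 h3)
        · have h1 : phi b' (Sum.inl i) = some 1 := by rw [phi_inl, if_pos hx]
          have h2 : oneWord c (Sum.inl i) = 1 := hub' _ 1 h1
          have h3 : c (Sum.inl i) = some 1 := oneWord_eq_one h2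
          exact phi_inl_one (hlc _ 1 h3)
      have hbe : b = b' := hbM.2 b' hb'M.1 hbb'
      subst hbe
      funext p
      cases hcp : c p with
      | some x => rw [hlc p x hcp]
      | none =>
        cases hbp : phi b p with
        | none => rfl
        | some x =>
          exfalso
          have hx1 : x = 1 := phi_some hbp
          subst hx1
          have := hub' p 1 hbp
          have hcp1 : c p = some 1 := oneWord_eq_one this
          rw [hcp] at hcp1
          exact (by simp : (none : Option F2) ≠ some 1) hcp1

/-- (B) `phi` of a maximal motif of `Cᶜ` is a maximal motif of `(polCode C)ᶜ`. -/
lemma phi_mem_maxMot_polCode (C : Set (Fin n → F2)) {b : Motif (Fin n)}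
    (hb : b ∈ maxMot Cᶜ) : phi b ∈ maxMot (polCode C)ᶜ := by
  constructor
  · -- variety (phi b) ⊆ (polCode C)ᶜ
    intro u hu
    intro hup
    simp only [polCode, Set.mem_iUnion] at hup
    obtain ⟨a, haM, hua⟩ := hup
    classical
    set w : Fin n → F2 := fun i => (b i).getD ((a i).getD 0) with hw
    have hwb : w ∈ variety b := by
      intro i x hx; simp [hw, hx]
    have hwa : w ∈ variety a := by
      intro i y hy
      cases hbi : b i with
      | none => simp [hw, hbi, hy]
      | some x =>
        have hwi : w i = x := by simp [hw, hbi]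
        rw [hwi]
        rcases F2cases x with rfl | rfl
        · rcases F2cases y with rfl | rfl
          · rfl
          · exfalso
            have h1 : u (Sum.inr i) = 1 := hu (Sum.inr i) 1 (by rw [phi_inr, if_pos hbi])
            have h0 : u (Sum.inr i) = 0 := hua (Sum.inr i) 0 (by simp [polMotif, hy])
            rw [h1] at h0
            exact (by decide : (1 : F2) ≠ 0) h0
        · rcases F2cases y with rfl | rfl
          · exfalso
            have h1 : u (Sum.inl i) = 1 := hu (Sum.inl i) 1 (by rw [phi_inl, if_pos hbi])
            have h0 : u (Sum.inl i) = 0 := hua (Sum.inl i) 0 (by simp [polMotif, hy])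
            rw [h1] at h0
            exact (by decide : (1 : F2) ≠ 0) h0
          · rfl
    have hwCc : w ∈ Cᶜ := hb.1 hwb
    exact hwCc (haM.1 hwa)
  · intro c hc hlc
    classical
    set b' : Motif (Fin n) := fun i =>
      if c (Sum.inl i) = some 1 then some 1
      else if c (Sum.inr i) = some 1 then some 0 else none with hb'def
    have hb'1 : ∀ i, b' i = some 1 → c (Sum.inl i) = some 1 := by
      intro i h
      simp only [hb'def] at h
      by_cases h1 : c (Sum.inl i) = some 1
      · exact h1
      · rw [if_neg h1] at h
        by_cases h2 : c (Sum.inr i) = some 1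
        · rw [if_pos h2] at h; exact absurd h (by decide)
        · rw [if_neg h2] at h; exact absurd h (by simp)
    have hb'0 : ∀ i, b' i = some 0 → c (Sum.inr i) = some 1 ∧ ¬ c (Sum.inl i) = some 1 := by
      intro i h
      simp only [hb'def] at h
      by_cases h1 : c (Sum.inl i) = some 1
      · rw [if_pos h1] at h; exact absurd h (by decide)
      · rw [if_neg h1] at h
        by_cases h2 : c (Sum.inr i) = some 1
        · exact ⟨h2, h1⟩
        · rw [if_neg h2] at h; exact absurd h (by simp)
    have hbb' : MotifLE b b' := by
      intro i x hx
      rcases F2cases x with rfl | rfl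
      · exact phi_inr_one (hlc _ 1 (hb'0 i hx).1)
      · exact phi_inl_one (hlc _ 1 (hb'1 i hx))
    have huc : oneWord c ∈ variety c := oneWord_mem c
    have hb'D : IsMotifOf Cᶜ b' := by
      intro w hwb'
      by_contra hwC
      simp only [Set.mem_compl_iff, not_not] at hwC
      have hwmot : IsMotifOf C (wordMotif w) := by
        rw [IsMotifOf, variety_wordMotif]
        simp [hwC]
      obtain ⟨a, haM, hwa'⟩ := exists_le_maxMot C (wordMotif w) hwmot
      have hwa : w ∈ variety a := by
        intro i y hy
        exact Option.some_injective _ (hwa' i y hy)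
      have hunP : oneWord c ∉ polCode C := hc huc
      apply hunP
      simp only [polCode, Set.mem_iUnion]
      refine ⟨a, haM, ?_⟩
      intro p x hp
      cases p with
      | inl i =>
        simp only [polMotif] at hp
        by_cases ha0 : a i = some 0
        swap
        · rw [if_neg ha0] at hp; exact absurd hp (by simp)
        · rw [if_pos ha0] at hp
          have hx0 : x = 0 := (Option.some_injective _ hp).symm
          subst hx0
          have hw0 : w i = 0 := hwa i 0 ha0
          have : c (Sum.inl i) ≠ some 1 := by
            intro hc1
            have hb1 : b' i = some 1 := by simp [hb'def, hc1]
            have := hwb' i 1 hb1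
            rw [hw0] at this
            exact (by decide : (0 : F2) ≠ 1) this
          simp [oneWord, this]
      | inr i =>
        simp only [polMotif] at hp
        by_cases ha1 : a i = some 1
        swap
        · rw [if_neg ha1] at hp; exact absurd hp (by simp)
        · rw [if_pos ha1] at hp
          have hx0 : x = 0 := (Option.some_injective _ hp).symm
          subst hx0
          have hw1 : w i = 1 := hwa i 1 ha1
          have : c (Sum.inr i) ≠ some 1 := by
            intro hc1
            by_cases hcl : c (Sum.inl i) = some 1
            · have h1 : b i = some 1 := phi_inl_one (hlc _ 1 hcl)
              have h0 : b i = some 0 := phi_inr_one (hlc _ 1 hc1)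
              rw [h1] at h0
              exact (by decide : ¬ (some (1:F2) = some 0)) h0
            · have hb0 : b' i = some 0 := by simp [hb'def, hcl, hc1]
              have := hwb' i 0 hb0
              rw [hw1] at this
              exact (by decide : (1 : F2) ≠ 0) this
          simp [oneWord, this]
    have hbeq : b = b' := hb.2 b' hb'D hbb'
    funext p
    cases hcp : c p with
    | some x => rw [hlc p x hcp]
    | none =>
      cases hbp : phi b p with
      | none => rfl
      | some x =>
        exfalso
        have hx1 : x = 1 := phi_some hbp
        subst hx1
        cases p with
        | inl i =>
          have h1 : b i = some 1 := phi_inl_one hbp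
          rw [hbeq] at h1
          have := hb'1 i h1
          rw [hcp] at this
          exact (by simp : (none : Option F2) ≠ some 1) this
        | inr i =>
          have h0 : b i = some 0 := phi_inr_one hbp
          rw [hbeq] at h0
          have := (hb'0 i h0).1
          rw [hcp] at this
          exact (by simp : (none : Option F2) ≠ some 1) this

end Phi
section Algebra

variable {ι : Type*} [Fintype ι] [DecidableEq ι]

lemma eval_pm (w : ι → F2) (σ τ : Finset ι) :
    eval w (pm σ τ) = (∏ i ∈ σ, w i) * ∏ j ∈ τ, (1 - w j) := by
  simp [pm]

lemma eval_pm_eq_one_iff (w : ι → F2) (σ τ : Finset ι) :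
    eval w (pm σ τ) = 1 ↔ (∀ i ∈ σ, w i = 1) ∧ (∀ j ∈ τ, w j = 0) := by
  rw [eval_pm]
  constructor
  · intro h
    constructor
    · intro i hi
      by_contra hne
      have h0 : w i = 0 := by rcases F2cases (w i) with h' | h'; exact h'; exact absurd h' hne
      rw [Finset.prod_eq_zero hi h0, zero_mul] at h
      exact (by decide : (0 : F2) ≠ 1) h
    · intro j hj
      by_contra hne
      have h1 : w j = 1 := by rcases F2cases (w j) with h' | h'; exact absurd h' hne; exact h'
      have : (1 : F2) - w j = 0 := by rw [h1]; decide
      rw [Finset.prod_eq_zero hj this, mul_zero] at h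
      exact (by decide : (0 : F2) ≠ 1) h
  · rintro ⟨h1, h0⟩
    rw [Finset.prod_eq_one (fun i hi => h1 i hi),
        Finset.prod_eq_one (fun j hj => by rw [h0 j hj, sub_zero]), one_mul]

/-- The motif with value `1` on `σ`, `0` on `τ`, `*` elsewhere. -/
def motifOf (σ τ : Finset ι) : Motif ι :=
  fun i => if i ∈ σ then some 1 else if i ∈ τ then some 0 else none

lemma motifOf_eq_one_iff (σ τ : Finset ι) (i : ι) :
    motifOf σ τ i = some 1 ↔ i ∈ σ := by
  unfold motifOf
  by_cases h1 : i ∈ σ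
  · simp [h1]
  · by_cases h2 : i ∈ τ <;> simp [h1, h2]

lemma motifOf_eq_zero_iff {σ τ : Finset ι} (hd : Disjoint σ τ) (i : ι) :
    motifOf σ τ i = some 0 ↔ i ∈ τ := by
  unfold motifOf
  by_cases h1 : i ∈ σ
  · have : i ∉ τ := Finset.disjoint_left.mp hd h1
    simp [h1, this]
  · by_cases h2 : i ∈ τ <;> simp [h1, h2]

lemma mem_variety_motifOf {σ τ : Finset ι} (hd : Disjoint σ τ) (w : ι → F2) :
    w ∈ variety (motifOf σ τ) ↔ (∀ i ∈ σ, w i = 1) ∧ (∀ j ∈ τ, w j = 0) := by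
  constructor
  · intro h
    exact ⟨fun i hi => h i 1 ((motifOf_eq_one_iff σ τ i).2 hi),
      fun j hj => h j 0 ((motifOf_eq_zero_iff hd j).2 hj)⟩
  · rintro ⟨h1, h0⟩ i x hx
    unfold motifOf at hx
    by_cases hi : i ∈ σ
    · rw [if_pos hi] at hx
      rw [h1 i hi]; exact Option.some_injective _ hx
    · rw [if_neg hi] at hx
      by_cases hj : i ∈ τ
      · rw [if_pos hj] at hx
        rw [h0 i hj]; exact Option.some_injective _ hx
      · rw [if_neg hj] at hx; exact absurd hx (by simp)

lemma motifOf_filter (b : Motif ι) :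
    motifOf (Finset.univ.filter (fun i => b i = some 1))
      (Finset.univ.filter (fun i => b i = some 0)) = b := by
  funext i
  by_cases h1 : b i = some 1
  · rw [(motifOf_eq_one_iff _ _ i).2 (by simp [h1]), h1]
  · by_cases h0 : b i = some 0
    · unfold motifOf
      rw [if_neg (by simp [h1]), if_pos (by simp [h0]), h0]
    · unfold motifOf
      rw [if_neg (by simp [h1]), if_neg (by simp [h0])]
      cases hb : b i with
      | none => rfl
      | some x => rcases F2cases x with rfl | rfl
                  · exact absurd hb h0
                  · exact absurd hb h1

lemma disjoint_filter_one_zero (b : Motif ι) :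
    Disjoint (Finset.univ.filter (fun i => b i = some 1))
      (Finset.univ.filter (fun i => b i = some 0)) := by
  rw [Finset.disjoint_left]
  intro i h1 h0
  simp only [Finset.mem_filter, Finset.mem_univ, true_and] at h1 h0
  rw [h1] at h0
  exact (by decide : ¬ (some (1 : F2) = some 0)) h0

lemma lagrange_eq_pm (a : Motif ι) :
    lagrange a = pm (Finset.univ.filter (fun i => a i = some 1))
      (Finset.univ.filter (fun j => a j = some 0)) := rfl

lemma eval_eq_zero_of_mem {C : Set (ι → F2)} {f : MvPolynomial ι F2} {w : ι → F2}
    (hf : f ∈ neuralIdeal C) (hw : w ∈ C) : eval w f = 0 := by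
  have hspan : neuralIdeal C ≤ RingHom.ker (eval w) := by
    rw [neuralIdeal, Ideal.span_le]
    rintro g ⟨u, hu, rfl⟩
    rw [SetLike.mem_coe, RingHom.mem_ker]
    show eval w (lagrange (wordMotif u)) = 0
    have hwu : w ≠ u := fun h => hu (h ▸ hw)
    rw [lagrange_eq_pm]
    rcases F2cases (eval w (pm (Finset.univ.filter (fun i => wordMotif u i = some 1))
        (Finset.univ.filter (fun j => wordMotif u j = some 0)))) with h0 | h1
    · exact h0
    · exfalso
      obtain ⟨h1s, h0s⟩ := (eval_pm_eq_one_iff _ _ _).1 h1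
      apply hwu
      funext i
      rcases F2cases (u i) with h | h
      · rw [h0s i (by simp [wordMotif, h]), h]
      · rw [h1s i (by simp [wordMotif, h]), h]
  exact hspan hf

lemma lagrange_mem_neuralIdeal (C : Set (ι → F2)) :
    ∀ (k : ℕ) (a : Motif ι), (Finset.univ.filter (fun i => a i = none)).card = k →
      variety a ⊆ Cᶜ → lagrange a ∈ neuralIdeal C := by
  intro k
  induction k with
  | zero =>
    intro a hcard hsub
    have hall : ∀ i, a i ≠ none := by
      intro i hi
      have hmem : i ∈ Finset.univ.filter (fun i => a i = none) := by simp [hi]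
      rw [Finset.card_eq_zero] at hcard
      rw [hcard] at hmem
      exact absurd hmem (Finset.notMem_empty i)
    have haw : a = wordMotif (defWord a) := by
      funext i
      cases hai : a i with
      | none => exact absurd hai (hall i)
      | some x => simp [wordMotif, defWord, hai]
    have hwC : defWord a ∈ Cᶜ := hsub (defWord_mem a)
    rw [haw]
    exact Ideal.subset_span ⟨defWord a, hwC, rfl⟩
  | succ k ih =>
    intro a hcard hsub
    have hne : (Finset.univ.filter (fun i => a i = none)).Nonempty := by
      rw [← Finset.card_pos, hcard]; omega
    obtain ⟨i, hi⟩ := hne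
    have hai : a i = none := (Finset.mem_filter.1 hi).2
    have hfiltu : ∀ v : Option F2, v ≠ none →
        (Finset.univ.filter (fun j => Function.update a i v j = none)) =
          (Finset.univ.filter (fun j => a j = none)).erase i := by
      intro v hv
      ext j
      simp only [Finset.mem_filter, Finset.mem_univ, true_and, Finset.mem_erase]
      by_cases hj : j = i
      · subst hj; simp [Function.update_self, hv]
      · simp [Function.update_of_ne hj, hj]
    have hcard' : ∀ v : Option F2, v ≠ none →
        (Finset.univ.filter (fun j => Function.update a i v j = none)).card = k := by
      intro v hv
      rw [hfiltu v hv, Finset.card_erase_of_mem hi, hcard]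
      omega
    have hsub' : ∀ v : Option F2, variety (Function.update a i v) ⊆ variety a := by
      intro v w hw j x hx
      have hj : j ≠ i := by rintro rfl; rw [hai] at hx; exact absurd hx (by simp)
      exact hw j x (by rw [Function.update_of_ne hj]; exact hx)
    -- filter computations for the two updates
    have hf11 : (Finset.univ.filter (fun j => Function.update a i (some 1) j = some 1)) =
        insert i (Finset.univ.filter (fun j => a j = some 1)) := by
      ext j
      simp only [Finset.mem_filter, Finset.mem_univ, true_and, Finset.mem_insert]
      by_cases hj : j = i
      · subst hj; simp [Function.update_self]
      · simp [Function.update_of_ne hj, hj]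
    have hf10 : (Finset.univ.filter (fun j => Function.update a i (some 1) j = some 0)) =
        Finset.univ.filter (fun j => a j = some 0) := by
      ext j
      simp only [Finset.mem_filter, Finset.mem_univ, true_and]
      by_cases hj : j = i
      · subst hj; simp [Function.update_self, hai]
      · simp [Function.update_of_ne hj]
    have hf01 : (Finset.univ.filter (fun j => Function.update a i (some 0) j = some 1)) =
        Finset.univ.filter (fun j => a j = some 1) := by
      ext j
      simp only [Finset.mem_filter, Finset.mem_univ, true_and]
      by_cases hj : j = i
      · subst hj; simp [Function.update_self, hai]
      · simp [Function.update_of_ne hj]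
    have hf00 : (Finset.univ.filter (fun j => Function.update a i (some 0) j = some 0)) =
        insert i (Finset.univ.filter (fun j => a j = some 0)) := by
      ext j
      simp only [Finset.mem_filter, Finset.mem_univ, true_and, Finset.mem_insert]
      by_cases hj : j = i
      · subst hj; simp [Function.update_self]
      · simp [Function.update_of_ne hj, hj]
    have hnm1 : i ∉ Finset.univ.filter (fun j => a j = some 1) := by simp [hai]
    have hnm0 : i ∉ Finset.univ.filter (fun j => a j = some 0) := by simp [hai]
    have key : lagrange a = lagrange (Function.update a i (some 0)) +
        lagrange (Function.update a i (some 1)) := by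
      unfold lagrange
      rw [hf11, hf10, hf01, hf00, Finset.prod_insert hnm1, Finset.prod_insert hnm0]
      ring
    rw [key]
    exact add_mem
      (ih (Function.update a i (some 0)) (hcard' _ (by simp))
        ((hsub' _).trans hsub))
      (ih (Function.update a i (some 1)) (hcard' _ (by simp))
        ((hsub' _).trans hsub))

lemma pm_eq_lagrange_motifOf {σ τ : Finset ι} (hd : Disjoint σ τ) :
    pm σ τ = lagrange (motifOf σ τ) := by
  rw [lagrange_eq_pm]
  have h1 : Finset.univ.filter (fun i => motifOf σ τ i = some 1) = σ := by
    ext i; simp [motifOf_eq_one_iff]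
  have h0 : Finset.univ.filter (fun i => motifOf σ τ i = some 0) = τ := by
    ext i; simp [motifOf_eq_zero_iff hd]
  rw [h1, h0]

lemma pm_mem_neuralIdeal_iff {C : Set (ι → F2)} {σ τ : Finset ι} (hd : Disjoint σ τ) :
    pm σ τ ∈ neuralIdeal C ↔ variety (motifOf σ τ) ⊆ Cᶜ := by
  constructor
  · intro h w hwv hwC
    have h0 := eval_eq_zero_of_mem h hwC
    have h1 : eval w (pm σ τ) = 1 :=
      (eval_pm_eq_one_iff w σ τ).2 ((mem_variety_motifOf hd w).1 hwv)
    rw [h0] at h1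
    exact (by decide : (0 : F2) ≠ 1) h1
  · intro h
    rw [pm_eq_lagrange_motifOf hd]
    exact lagrange_mem_neuralIdeal C _ _ rfl h

end Algebra
section Degree

variable {ι : Type*} [Fintype ι] [DecidableEq ι]

/-- The exponent vector of the squarefree monomial supported on `s`. -/
noncomputable def msum (s : Finset ι) : ι →₀ ℕ := ∑ i ∈ s, Finsupp.single i 1

omit [Fintype ι] in
lemma msum_apply (s : Finset ι) (j : ι) : msum s j = if j ∈ s then 1 else 0 := by
  classical
  rw [msum, Finsupp.finset_sum_apply]
  simp only [Finsupp.single_apply]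
  rw [Finset.sum_ite_eq' s j (fun _ => 1)]

omit [Fintype ι] in
lemma msum_inj {s t : Finset ι} (h : msum s = msum t) : s = t := by
  ext j
  have hj := DFunLike.congr_fun h j
  rw [msum_apply, msum_apply] at hj
  by_cases hs : j ∈ s <;> by_cases ht : j ∈ t <;> simp [hs, ht] at hj ⊢

omit [Fintype ι] in
lemma msum_degree (s : Finset ι) : (msum s).sum (fun _ e => e) = s.card := by
  classical
  induction s using Finset.induction with
  | empty => simp [msum]
  | @insert a s h ih =>
    rw [msum, Finset.sum_insert h, Finsupp.sum_add_index' (fun _ => rfl) (fun _ _ _ => rfl),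
      Finsupp.sum_single_index rfl, ← msum, ih, Finset.card_insert_of_notMem h]
    omega

omit [Fintype ι] in
lemma prod_X_msum (s : Finset ι) :
    (∏ i ∈ s, (X i : MvPolynomial ι F2)) = monomial (msum s) 1 := by
  classical
  induction s using Finset.induction with
  | empty => simp [msum]
  | @insert a s h ih =>
    have hm : msum (insert a s) = Finsupp.single a 1 + msum s := by
      rw [msum, msum, Finset.sum_insert h]
    rw [Finset.prod_insert h, ih, hm]
    show monomial (Finsupp.single a 1) 1 * monomial (msum s) 1 = _
    rw [monomial_mul, one_mul]

omit [Fintype ι] in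
lemma one_sub_X_eq (j : ι) : (1 - X j : MvPolynomial ι F2) = 1 + X j :=
  CharTwo.sub_eq_add 1 (X j)

omit [Fintype ι] in
lemma pm_expand {σ τ : Finset ι} (hd : Disjoint σ τ) :
    pm σ τ = ∑ t ∈ τ.powerset, monomial (msum (σ ∪ (τ \ t))) 1 := by
  classical
  rw [pm, Finset.prod_congr rfl (fun j _ => one_sub_X_eq j), Finset.prod_add, Finset.mul_sum]
  refine Finset.sum_congr rfl ?_
  intro t ht
  rw [Finset.prod_const_one, one_mul, ← Finset.prod_union
    (hd.mono_right (Finset.sdiff_subset)), prod_X_msum]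

omit [Fintype ι] in
lemma coeff_pm_top {σ τ : Finset ι} (hd : Disjoint σ τ) :
    coeff (msum (σ ∪ τ)) (pm σ τ) = 1 := by
  classical
  rw [pm_expand hd, coeff_sum]
  rw [Finset.sum_eq_single ∅ ?h1 ?h2]
  · rw [Finset.sdiff_empty, coeff_monomial, if_pos rfl]
  case h1 =>
    intro t ht htne
    rw [coeff_monomial, if_neg]
    intro hc
    have hst := msum_inj hc
    apply htne
    ext j
    constructor
    · intro hj
      have hjτ : j ∈ τ := Finset.mem_powerset.1 ht hj
      have : j ∈ σ ∪ (τ \ t) := by rw [hst]; exact Finset.mem_union_right _ hjτ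
      rcases Finset.mem_union.1 this with h | h
      · exact absurd hjτ (Finset.disjoint_left.mp hd h)
      · exact absurd hj (Finset.mem_sdiff.1 h).2
    · intro hj
      exact absurd hj (Finset.notMem_empty j)
  case h2 =>
    intro h
    exact absurd (Finset.empty_mem_powerset τ) h

omit [Fintype ι] in
lemma totalDegree_pm {σ τ : Finset ι} (hd : Disjoint σ τ) :
    (pm σ τ).totalDegree = σ.card + τ.card := by
  classical
  apply le_antisymm
  · refine le_trans (totalDegree_mul _ _) (add_le_add ?_ ?_)
    · refine le_trans (totalDegree_finset_prod _ _) ?_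
      simp [totalDegree_X]
    · refine le_trans (totalDegree_finset_prod _ _) ?_
      have hb : ∀ j ∈ τ, ((1 - X j : MvPolynomial ι F2)).totalDegree ≤ 1 := by
        intro j _
        rw [one_sub_X_eq]
        refine le_trans (totalDegree_add _ _) ?_
        simp [totalDegree_X, totalDegree_one]
      calc ∑ j ∈ τ, ((1 - X j : MvPolynomial ι F2)).totalDegree
          ≤ ∑ _j ∈ τ, 1 := Finset.sum_le_sum hb
        _ = τ.card := by simp
  · have hmem : msum (σ ∪ τ) ∈ (pm σ τ).support := by
      rw [MvPolynomial.mem_support_iff, coeff_pm_top hd]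
      exact one_ne_zero
    have := MvPolynomial.le_totalDegree hmem
    rwa [msum_degree, Finset.card_union_of_disjoint hd] at this

omit [Fintype ι] in
lemma pm_dvd {σ τ σ' τ' : Finset ι} (hσ : σ' ⊆ σ) (hτ : τ' ⊆ τ) :
    (pm σ' τ' : MvPolynomial ι F2) ∣ pm σ τ := by
  classical
  refine ⟨pm (σ \ σ') (τ \ τ'), ?_⟩
  rw [pm, pm, pm, ← Finset.prod_sdiff hσ, ← Finset.prod_sdiff hτ]
  ring

lemma dvd_pm_iff {σ τ σ' τ' : Finset ι} (hd : Disjoint σ τ) (hd' : Disjoint σ' τ') :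
    (pm σ' τ' : MvPolynomial ι F2) ∣ pm σ τ ↔ σ' ⊆ σ ∧ τ' ⊆ τ := by
  constructor
  · rintro ⟨h, hh⟩
    have hsub : variety (motifOf σ τ) ⊆ variety (motifOf σ' τ') := by
      intro w hw
      have h1 : eval w (pm σ τ) = 1 :=
        (eval_pm_eq_one_iff w σ τ).2 ((mem_variety_motifOf hd w).1 hw)
      have hmul : eval w (pm σ' τ') * eval w h = 1 := by
        rw [← map_mul, ← hh]; exact h1
      have h2 : eval w (pm σ' τ') = 1 := by
        rcases F2cases (eval w (pm σ' τ')) with h0 | h0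
        · rw [h0, zero_mul] at hmul; exact absurd hmul (by decide)
        · exact h0
      exact (mem_variety_motifOf hd' w).2 ((eval_pm_eq_one_iff w σ' τ').1 h2)
    have hle := variety_subset_iff.mp hsub
    constructor
    · intro i hi
      exact (motifOf_eq_one_iff σ τ i).1 (hle i 1 ((motifOf_eq_one_iff σ' τ' i).2 hi))
    · intro i hi
      exact (motifOf_eq_zero_iff hd i).1 (hle i 0 ((motifOf_eq_zero_iff hd' i).2 hi))
  · rintro ⟨h1, h2⟩
    exact pm_dvd h1 h2

lemma motifOf_inj {σ τ σ' τ' : Finset ι} (hd : Disjoint σ τ) (hd' : Disjoint σ' τ')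
    (h : motifOf σ τ = motifOf σ' τ') : σ = σ' ∧ τ = τ' := by
  constructor
  · ext i
    rw [← motifOf_eq_one_iff σ τ i, ← motifOf_eq_one_iff σ' τ' i, h]
  · ext i
    rw [← motifOf_eq_zero_iff hd i, ← motifOf_eq_zero_iff hd' i, h]

lemma pm_inj {σ τ σ' τ' : Finset ι} (hd : Disjoint σ τ) (hd' : Disjoint σ' τ')
    (h : (pm σ τ : MvPolynomial ι F2) = pm σ' τ') : σ = σ' ∧ τ = τ' := by
  have hv : variety (motifOf σ τ) = variety (motifOf σ' τ') := by
    ext w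
    rw [mem_variety_motifOf hd, mem_variety_motifOf hd',
      ← eval_pm_eq_one_iff, ← eval_pm_eq_one_iff, h]
  exact motifOf_inj hd hd' (variety_inj hv)

/-- The canonical form of a neural ideal corresponds to the maximal motifs
of the complement of the code. -/
theorem CF_neuralIdeal (C : Set (ι → F2)) :
    CF (neuralIdeal C) =
      {f | ∃ σ τ : Finset ι, Disjoint σ τ ∧ f = pm σ τ ∧ motifOf σ τ ∈ maxMot Cᶜ} := by
  classical
  ext f
  constructor
  · rintro ⟨⟨σ, τ, hd, rfl⟩, hmem, hmin⟩
    refine ⟨σ, τ, hd, rfl, (pm_mem_neuralIdeal_iff hd).1 hmem, ?_⟩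
    intro b hb hlb
    set σb := Finset.univ.filter (fun i => b i = some 1) with hσb
    set τb := Finset.univ.filter (fun i => b i = some 0) with hτb
    have hdb : Disjoint σb τb := disjoint_filter_one_zero b
    have hbeq : motifOf σb τb = b := motifOf_filter b
    have hσ : σb ⊆ σ := by
      intro i hi
      have h1 : b i = some 1 := by
        have := Finset.mem_filter.1 hi; exact this.2
      exact (motifOf_eq_one_iff σ τ i).1 (hlb i 1 h1)
    have hτ : τb ⊆ τ := by
      intro i hi
      have h0 : b i = some 0 := by
        have := Finset.mem_filter.1 hi; exact this.2
      exact (motifOf_eq_zero_iff hd i).1 (hlb i 0 h0)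
    have hmemb : pm σb τb ∈ neuralIdeal C := by
      rw [pm_mem_neuralIdeal_iff hdb, ← IsMotifOf]
      rw [hbeq]; exact hb
    by_cases heq : σb = σ ∧ τb = τ
    · rw [← hbeq, heq.1, heq.2]
    · exfalso
      apply hmin
      refine ⟨pm σb τb, ⟨σb, τb, hdb, rfl⟩, hmemb, ?_, pm_dvd hσ hτ⟩
      rw [totalDegree_pm hdb, totalDegree_pm hd]
      rcases not_and_or.1 heq with h | h
      · have h1 := Finset.card_lt_card (Finset.ssubset_iff_subset_ne.2 ⟨hσ, h⟩)
        have h2 := Finset.card_le_card hτ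
        omega
      · have h1 := Finset.card_lt_card (Finset.ssubset_iff_subset_ne.2 ⟨hτ, h⟩)
        have h2 := Finset.card_le_card hσ
        omega
  · rintro ⟨σ, τ, hd, rfl, hmotmax⟩
    refine ⟨⟨σ, τ, hd, rfl⟩, (pm_mem_neuralIdeal_iff hd).2 hmotmax.1, ?_⟩
    rintro ⟨g, ⟨σ', τ', hd', rfl⟩, hg, hdeg, hdvd⟩
    obtain ⟨hσ, hτ⟩ := (dvd_pm_iff hd hd').1 hdvd
    have hb' : IsMotifOf Cᶜ (motifOf σ' τ') := (pm_mem_neuralIdeal_iff hd').1 hg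
    have hle : MotifLE (motifOf σ τ) (motifOf σ' τ') := by
      intro i x hx
      rcases F2cases x with rfl | rfl
      · exact (motifOf_eq_zero_iff hd i).2 (hτ ((motifOf_eq_zero_iff hd' i).1 hx))
      · exact (motifOf_eq_one_iff σ τ i).2 (hσ ((motifOf_eq_one_iff σ' τ' i).1 hx))
    obtain ⟨rfl, rfl⟩ := motifOf_inj hd hd' (hmotmax.2 _ hb' hle)
    exact absurd hdeg (lt_irrefl _)

end Degree
section Final

variable {n : ℕ}

lemma disjoint_images (σ τ : Finset (Fin n)) :
    Disjoint (σ.image Sum.inl) (τ.image (Sum.inr : Fin n → Fin n ⊕ Fin n)) := by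
  rw [Finset.disjoint_left]
  intro p hp hq
  obtain ⟨i, _, rfl⟩ := Finset.mem_image.1 hp
  obtain ⟨j, _, hj⟩ := Finset.mem_image.1 hq
  exact Sum.inr_ne_inl hj

lemma ppm_eq_pm (σ τ : Finset (Fin n)) :
    ppm σ τ = pm (σ.image Sum.inl ∪ τ.image Sum.inr) (∅ : Finset (Fin n ⊕ Fin n)) := by
  rw [pm, Finset.prod_empty, mul_one,
    Finset.prod_union (disjoint_images σ τ),
    Finset.prod_image (fun x _ y _ h => Sum.inl_injective h),
    Finset.prod_image (fun x _ y _ h => Sum.inr_injective h)]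
  rfl

lemma mem_image_inl_union {σ τ : Finset (Fin n)} (i : Fin n) :
    (Sum.inl i ∈ σ.image Sum.inl ∪ τ.image Sum.inr) ↔ i ∈ σ := by
  simp

lemma mem_image_inr_union {σ τ : Finset (Fin n)} (i : Fin n) :
    (Sum.inr i ∈ σ.image Sum.inl ∪ τ.image Sum.inr) ↔ i ∈ τ := by
  simp

lemma phi_motifOf {σ τ : Finset (Fin n)} (hd : Disjoint σ τ) :
    phi (motifOf σ τ) = motifOf (σ.image Sum.inl ∪ τ.image Sum.inr) ∅ := by
  funext p
  cases p with
  | inl i =>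
    rw [phi_inl]
    by_cases hi : i ∈ σ
    · rw [if_pos ((motifOf_eq_one_iff σ τ i).2 hi),
        ((motifOf_eq_one_iff _ _ (Sum.inl i)).2 ((mem_image_inl_union i).2 hi))]
    · rw [if_neg (fun h => hi ((motifOf_eq_one_iff σ τ i).1 h))]
      unfold motifOf
      rw [if_neg (fun h => hi ((mem_image_inl_union i).1 h)),
        if_neg (Finset.notMem_empty _)]
  | inr i =>
    rw [phi_inr]
    by_cases hi : i ∈ τ
    · rw [if_pos ((motifOf_eq_zero_iff hd i).2 hi),
        ((motifOf_eq_one_iff _ _ (Sum.inr i)).2 ((mem_image_inr_union i).2 hi))]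
    · rw [if_neg (fun h => hi ((motifOf_eq_zero_iff hd i).1 h))]
      unfold motifOf
      rw [if_neg (fun h => hi ((mem_image_inr_union i).1 h)),
        if_neg (Finset.notMem_empty _)]

end Final
/-- `{fᵖ : f ∈ CF(J_C)} = CF(J_{C^[p]})` and
`CF(J_{C^[p]}) ⊆ CF(J_{Cᵖ})`. -/
theorem polSet_CF_eq_CF_formalPol {n : ℕ} (C : Set (Fin n → F2)) :
    polSet (CF (neuralIdeal C)) = CF (neuralIdeal (formalPol C)) ∧
    CF (neuralIdeal (formalPol C)) ⊆ CF (neuralIdeal (polCode C)) := by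
  classical
  have hcompl : (formalPol C)ᶜ = barPolBarCode Cᶜ := compl_compl _
  constructor
  · ext g
    constructor
    · rintro ⟨f, hf, σ, τ, hd, hfeq, rfl⟩
      rw [CF_neuralIdeal] at hf
      obtain ⟨σ₀, τ₀, hd₀, hfe0, hmax⟩ := hf
      obtain ⟨rfl, rfl⟩ := pm_inj hd hd₀ (hfeq ▸ hfe0)
      rw [CF_neuralIdeal]
      refine ⟨σ.image Sum.inl ∪ τ.image Sum.inr, ∅, Finset.disjoint_empty_right _,
        ppm_eq_pm σ τ, ?_⟩
      rw [hcompl, maxMot_barPolBarCode]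
      exact ⟨motifOf σ τ, hmax, (phi_motifOf hd).symm⟩
    · intro hg
      rw [CF_neuralIdeal] at hg
      obtain ⟨S, T, hdS, rfl, hmm⟩ := hg
      rw [hcompl, maxMot_barPolBarCode] at hmm
      obtain ⟨b, hbM, heq⟩ := hmm
      set σ := Finset.univ.filter (fun i => b i = some 1) with hσ
      set τ := Finset.univ.filter (fun i => b i = some 0) with hτ
      have hd : Disjoint σ τ := disjoint_filter_one_zero b
      have hbeq : motifOf σ τ = b := motifOf_filter b
      have h2 : motifOf S T = motifOf (σ.image Sum.inl ∪ τ.image Sum.inr) ∅ := by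
        rw [heq, ← hbeq, phi_motifOf hd]
      obtain ⟨hS, hT⟩ := motifOf_inj hdS (Finset.disjoint_empty_right _) h2
      refine ⟨pm σ τ, ?_, σ, τ, hd, rfl, ?_⟩
      · rw [CF_neuralIdeal]
        exact ⟨σ, τ, hd, rfl, by rw [hbeq]; exact hbM⟩
      · rw [hS, hT, ← ppm_eq_pm]
  · intro f hf
    rw [CF_neuralIdeal] at hf ⊢
    obtain ⟨S, T, hd, rfl, hmm⟩ := hf
    rw [hcompl, maxMot_barPolBarCode] at hmm
    obtain ⟨b, hbM, heq⟩ := hmm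
    refine ⟨S, T, hd, rfl, ?_⟩
    rw [heq]
    exact phi_mem_maxMot_polCode C hbM
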